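/- Let f : C → C be a geodesic-preserving bijection of the flat cylinder C. Then there exist σ ∈ {1, -1} and real numbers x₀, α, a, b with a ≠ 0 such that f(π(x, y)) = π(σ·x + α·y + x₀, a·y + b) for all x, y ∈ ℝ. (Equivalently, f is the composition of an isometry of the cylinder, an affine map in the ℝ-coordinate, and a twisting map.) -/

import Mathlib

/-- The flat cylinder `C = (ℝ/ℤ) × ℝ`. -/
abbrev Cyl : Type := AddCircle (1 : ℝ) × ℝ

/-- The quotient map `π : ℝ × ℝ → C`, `π(x, y) = (↑x, y)`. -/
noncomputable def cylπ (p : ℝ × ℝ) : Cyl := ((p.1 : AddCircle (1 : ℝ)), p.2)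

/-- An affine line in `ℝ²`. -/
def IsLine (L : Set (ℝ × ℝ)) : Prop :=
  ∃ p v : ℝ × ℝ, v ≠ 0 ∧ L = {x | ∃ t : ℝ, x = p + t • v}

/-- A geodesic of the flat cylinder is the image under `π` of an affine line. -/
def IsCylGeodesic (G : Set Cyl) : Prop :=
  ∃ L : Set (ℝ × ℝ), IsLine L ∧ G = cylπ '' L

namespace CylProof
open Set Function

noncomputable section

abbrev AC := AddCircle (1 : ℝ)

lemma coe_eq_zero {x : ℝ} : (x : AC) = 0 ↔ ∃ k : ℤ, x = k := by
  rw [AddCircle.coe_eq_zero_iff]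
  constructor
  · rintro ⟨n, hn⟩; exact ⟨n, by simpa using hn.symm⟩
  · rintro ⟨k, hk⟩; exact ⟨k, by simpa using hk.symm⟩

lemma coe_eq_iff {x y : ℝ} : (x : AC) = y ↔ ∃ k : ℤ, y = x + k := by
  constructor
  · intro h
    have : ((x - y : ℝ) : AC) = 0 := by
      rw [AddCircle.coe_sub, h, sub_self]
    rcases coe_eq_zero.1 this with ⟨k, hk⟩
    exact ⟨-k, by push_cast; linarith⟩
  · rintro ⟨k, rfl⟩
    have h0 : ((k : ℝ) : AC) = 0 := coe_eq_zero.2 ⟨k, rfl⟩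
    rw [AddCircle.coe_add, h0, add_zero]

lemma ac_surj (θ : AC) : ∃ x : ℝ, (x : AC) = θ := by
  exact QuotientAddGroup.mk_surjective θ

/-- vertical geodesic -/
def Ver (θ : AC) : Set Cyl := {p | p.1 = θ}

/-- helix (m ≠ 0) or circle (m = 0) -/
def Hel (m c : ℝ) : Set Cyl := cylπ '' {q : ℝ × ℝ | q.2 = m * q.1 + c}

def Cir (r : ℝ) : Set Cyl := {p | p.2 = r}

lemma mem_Hel {p : Cyl} {m c : ℝ} : p ∈ Hel m c ↔ ∃ t : ℝ, p = ((t : AC), m * t + c) := by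
  constructor
  · rintro ⟨⟨qx, qy⟩, hq, rfl⟩
    have hq' : qy = m * qx + c := hq
    exact ⟨qx, by simp [cylπ, hq']⟩
  · rintro ⟨t, rfl⟩; exact ⟨(t, m * t + c), by simp, rfl⟩

lemma mem_Hel' {x y m c : ℝ} : ((x : AC), y) ∈ Hel m c ↔ ∃ k : ℤ, y = m * (x + k) + c := by
  rw [mem_Hel]
  constructor
  · rintro ⟨t, ht⟩
    have h1 : (x : AC) = t := congrArg Prod.fst ht
    have h2 : y = m * t + c := congrArg Prod.snd ht
    rcases coe_eq_iff.1 h1 with ⟨k, rfl⟩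
    exact ⟨k, h2⟩
  · rintro ⟨k, hk⟩
    refine ⟨x + k, ?_⟩
    have : (x : AC) = ((x + (k:ℝ) : ℝ) : AC) := coe_eq_iff.2 ⟨k, rfl⟩
    rw [Prod.ext_iff]; exact ⟨this, hk⟩

lemma Hel_zero (c : ℝ) : Hel 0 c = Cir c := by
  ext ⟨θ, y⟩
  rcases ac_surj θ with ⟨x, rfl⟩
  simp only [mem_Hel', Cir, Set.mem_setOf_eq, zero_mul, zero_add]
  constructor
  · rintro ⟨k, hk⟩; exact hk
  · intro h; exact ⟨0, h⟩

lemma mem_Cir {p : Cyl} {r : ℝ} : p ∈ Cir r ↔ p.2 = r := Iff.rfl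


lemma injseq : Function.Injective (fun n : ℕ => ((1 / (n + 2) : ℝ) : AC)) := by
  intro n k h
  simp only at h
  rcases coe_eq_iff.1 h with ⟨j, hj⟩
  have hn : (0:ℝ) < (n:ℝ) + 2 := by positivity
  have hk : (0:ℝ) < (k:ℝ) + 2 := by positivity
  have hn1 : (1 / ((n:ℝ) + 2)) ≤ 1/2 := by
    rw [div_le_div_iff₀ hn (by norm_num)]; push_cast; linarith
  have hk1 : (1 / ((k:ℝ) + 2)) ≤ 1/2 := by
    rw [div_le_div_iff₀ hk (by norm_num)]; push_cast; linarith
  have hnp : (0:ℝ) < 1 / ((n:ℝ) + 2) := by positivity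
  have hkp : (0:ℝ) < 1 / ((k:ℝ) + 2) := by positivity
  have hj0 : j = 0 := by
    by_contra hj0
    have h1 : (1:ℝ) ≤ |(j:ℝ)| := by
      rw [← Int.cast_abs]; exact_mod_cast Int.one_le_abs hj0
    have h2 : |(j:ℝ)| < 1 := by
      rw [abs_lt]; constructor <;> linarith
    linarith
  rw [hj0] at hj
  push_cast at hj
  have heq : 1 / ((k:ℝ) + 2) = 1 / ((n:ℝ) + 2) := by linarith
  rw [div_eq_div_iff hk.ne' hn.ne'] at heq
  have : (n:ℝ) = (k:ℝ) := by linarith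
  exact_mod_cast this

lemma Hel_infinite (m c : ℝ) : (Hel m c).Infinite := by
  refine Set.infinite_of_injective_forall_mem
    (f := fun n : ℕ => (((1 / (n + 2) : ℝ) : AC), m * (1 / (n + 2)) + c)) ?_ ?_
  · intro n k h
    exact injseq (congrArg Prod.fst h)
  · intro n
    exact mem_Hel.2 ⟨1 / (n + 2), rfl⟩

lemma Ver_infinite (θ : AC) : (Ver θ).Infinite := by
  refine Set.infinite_of_injective_forall_mem (f := fun n : ℕ => (θ, (n : ℝ))) ?_ ?_
  · intro n k h
    have h2 : ((n:ℝ)) = k := congrArg Prod.snd h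
    exact_mod_cast h2
  · intro n; simp [Ver]

lemma half_ne : ((0:ℝ) : AC) ≠ (((1:ℝ)/2 : ℝ) : AC) := by
  intro h
  rcases coe_eq_iff.1 h with ⟨k, hk⟩
  have : (2:ℝ) * k = 1 := by push_cast at hk; linarith
  have : (2 * k : ℤ) = 1 := by exact_mod_cast this
  omega

lemma Ver_ne_Hel {θ : AC} {m c : ℝ} (hm : m ≠ 0) : Ver θ ≠ Hel m c := by
  intro h
  have h0 : (((0:ℝ) : AC), m * 0 + c) ∈ Ver θ := h ▸ mem_Hel.2 ⟨0, rfl⟩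
  have h1 : (((1/2:ℝ) : AC), m * (1/2) + c) ∈ Ver θ := h ▸ mem_Hel.2 ⟨1/2, rfl⟩
  have e0 : ((0:ℝ) : AC) = θ := h0
  have e1 : (((1:ℝ)/2 : ℝ) : AC) = θ := h1
  exact half_ne (e0.trans e1.symm)

lemma Ver_ne_Cir {θ : AC} {r : ℝ} : Ver θ ≠ Cir r := by
  intro h
  have h0 : (((0:ℝ) : AC), r) ∈ Ver θ := by rw [h]; show r = r; rfl
  have h1 : (((1/2:ℝ) : AC), r) ∈ Ver θ := by rw [h]; show r = r; rfl
  have e0 : ((0:ℝ) : AC) = θ := h0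
  have e1 : (((1:ℝ)/2 : ℝ) : AC) = θ := h1
  exact half_ne (e0.trans e1.symm)

lemma Hel_ne_Cir {m c r : ℝ} (hm : m ≠ 0) : Hel m c ≠ Cir r := by
  intro h
  have h0 : (((0:ℝ):AC), m * 0 + c) ∈ Cir r := h ▸ mem_Hel.2 ⟨0, rfl⟩
  have h1 : (((1:ℝ):AC), m * 1 + c) ∈ Cir r := h ▸ mem_Hel.2 ⟨1, rfl⟩
  have e0 : m * 0 + c = r := h0
  have e1 : m * 1 + c = r := h1
  apply hm; linarith

lemma Cir_disj {r s : ℝ} (h : r ≠ s) : Cir r ∩ Cir s = ∅ := by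
  ext ⟨θ, y⟩
  simp only [Set.mem_inter_iff, Cir, Set.mem_setOf_eq, Set.mem_empty_iff_false, iff_false]
  rintro ⟨rfl, rfl⟩; exact h rfl

lemma Ver_inter_Cir (x r : ℝ) : Ver ((x:ℝ):AC) ∩ Cir r = {(((x:ℝ):AC), r)} := by
  ext ⟨θ, y⟩
  constructor
  · rintro ⟨h1, h2⟩
    have h1' : θ = ((x:ℝ):AC) := h1
    have h2' : y = r := h2
    rw [Set.mem_singleton_iff, Prod.ext_iff]
    exact ⟨h1', h2'⟩
  · rintro h
    rw [Set.mem_singleton_iff] at h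
    rw [h]
    exact ⟨rfl, rfl⟩

lemma Hel_inter_Cir {m : ℝ} (hm : m ≠ 0) (c r : ℝ) :
    Hel m c ∩ Cir r = {((((r - c)/m :ℝ):AC), r)} := by
  ext ⟨θ, y⟩
  simp only [Set.mem_inter_iff, Cir, Set.mem_setOf_eq, Set.mem_singleton_iff, Prod.ext_iff]
  constructor
  · rintro ⟨hh, hy⟩
    subst hy
    rcases mem_Hel.1 hh with ⟨t, ht⟩
    have h1 : θ = ((t:ℝ):AC) := congrArg Prod.fst ht
    have h2 : y = m * t + c := congrArg Prod.snd ht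
    have h3 : t = (y - c)/m := by field_simp; linarith
    exact ⟨by rw [h1, h3], rfl⟩
  · rintro ⟨h1, h2⟩
    subst h2
    refine ⟨?_, rfl⟩
    rw [h1]
    refine mem_Hel.2 ⟨(y - c)/m, ?_⟩
    rw [Prod.ext_iff]
    refine ⟨rfl, ?_⟩
    show y = m * ((y - c)/m) + c
    field_simp
    ring

lemma Ver_inter_Hel_infinite {m : ℝ} (hm : m ≠ 0) (x c : ℝ) :
    (Ver ((x:ℝ):AC) ∩ Hel m c).Infinite := by
  refine Set.infinite_of_injective_forall_mem
    (f := fun n : ℕ => (((x:ℝ):AC), m * (x + n) + c)) ?_ ?_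
  · intro n k h
    have h2 := congrArg Prod.snd h
    simp only at h2
    have h3 : m * ((x:ℝ) + n) = m * (x + k) := by linarith
    have := mul_left_cancel₀ hm h3
    have : (n:ℝ) = k := by linarith
    exact_mod_cast this
  · intro n
    refine ⟨rfl, mem_Hel'.2 ⟨n, by push_cast; ring⟩⟩

lemma Hel_inter_Hel_infinite {m m' : ℝ} (hm : m ≠ 0) (hm' : m' ≠ 0) (hne : m ≠ m')
    (c c' : ℝ) : (Hel m c ∩ Hel m' c').Infinite := by
  have hsub : m - m' ≠ 0 := sub_ne_zero.2 hne
  refine Set.infinite_of_injective_forall_mem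
    (f := fun k : ℕ => ((((m' * k + c' - c)/(m - m') : ℝ):AC),
      m * ((m' * k + c' - c)/(m - m')) + c)) ?_ ?_
  · intro n k h
    have h2 := congrArg Prod.snd h
    simp only at h2
    have h3 := mul_left_cancel₀ hm (by linarith :
      m * ((m' * (n:ℝ) + c' - c)/(m - m')) = m * ((m' * k + c' - c)/(m - m')))
    rw [div_eq_div_iff hsub hsub] at h3
    have h4 : m' * (n:ℝ) = m' * k := by
      have h5 := mul_right_cancel₀ (b := m - m') hsub h3
      linarith
    have : (n:ℝ) = k := mul_left_cancel₀ hm' h4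
    exact_mod_cast this
  · intro k
    constructor
    · exact mem_Hel.2 ⟨(m' * k + c' - c)/(m - m'), rfl⟩
    · refine mem_Hel'.2 ⟨k, ?_⟩
      push_cast
      field_simp
      ring

lemma Cir_infinite (r : ℝ) : (Cir r).Infinite := by
  rw [← Hel_zero]; exact Hel_infinite 0 r

lemma Ver_disj {θ θ' : AC} (h : θ ≠ θ') : Ver θ ∩ Ver θ' = ∅ := by
  ext ⟨ψ, y⟩
  simp only [Set.mem_inter_iff, Ver, Set.mem_setOf_eq, Set.mem_empty_iff_false, iff_false]
  rintro ⟨rfl, rfl⟩; exact h rfl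

lemma Ver_eq_image (x : ℝ) : Ver ((x:ℝ):AC) = cylπ '' {q : ℝ × ℝ | q.1 = x} := by
  ext ⟨ψ, y⟩
  constructor
  · intro h
    have h' : ψ = ((x:ℝ):AC) := h
    exact ⟨(x, y), rfl, by simp [cylπ, h']⟩
  · rintro ⟨⟨qx, qy⟩, hq, heq⟩
    have hq' : qx = x := hq
    have h1 : ψ = ((qx:ℝ):AC) := (congrArg Prod.fst heq).symm
    show ψ = ((x:ℝ):AC)
    rw [h1, hq']

lemma Ver_geodesic (θ : AC) : IsCylGeodesic (Ver θ) := by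
  rcases ac_surj θ with ⟨x, rfl⟩
  refine ⟨{q : ℝ × ℝ | q.1 = x}, ⟨(x, 0), (0, 1), by simp [Prod.ext_iff], ?_⟩, Ver_eq_image x⟩
  ext ⟨qx, qy⟩
  simp only [Set.mem_setOf_eq, Prod.ext_iff, Prod.mk_add_mk, Prod.smul_mk]
  constructor
  · intro h
    exact ⟨qy, by simp [h], by simp⟩
  · rintro ⟨t, h1, h2⟩
    simpa using h1

lemma line_eq (m c : ℝ) : {q : ℝ × ℝ | q.2 = m * q.1 + c} =
    {q : ℝ × ℝ | ∃ t : ℝ, q = (0, c) + t • ((1:ℝ), m)} := by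
  ext ⟨qx, qy⟩
  simp only [Set.mem_setOf_eq, Prod.ext_iff, Prod.mk_add_mk, Prod.smul_mk, smul_eq_mul]
  constructor
  · intro h
    exact ⟨qx, by simp, by simp [h]; ring⟩
  · rintro ⟨t, h1, h2⟩
    simp only [zero_add, mul_one] at h1
    rw [h2, h1]; ring

lemma Hel_geodesic (m c : ℝ) : IsCylGeodesic (Hel m c) := by
  refine ⟨{q : ℝ × ℝ | q.2 = m * q.1 + c}, ⟨(0, c), (1, m), by simp [Prod.ext_iff], line_eq m c⟩, rfl⟩

lemma Cir_geodesic (r : ℝ) : IsCylGeodesic (Cir r) := by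
  rw [← Hel_zero]; exact Hel_geodesic 0 r

lemma mem_line_iff (p v q : ℝ × ℝ) (t : ℝ) :
    q = p + t • v ↔ (q.1 = p.1 + t * v.1 ∧ q.2 = p.2 + t * v.2) := by
  rw [Prod.ext_iff]
  simp [Prod.fst_add, Prod.snd_add, smul_eq_mul]

lemma geodesic_cases {G : Set Cyl} (hG : IsCylGeodesic G) :
    (∃ θ, G = Ver θ) ∨ (∃ m c, G = Hel m c) := by
  obtain ⟨L, ⟨p, v, hv, rfl⟩, rfl⟩ := hG
  by_cases hv1 : v.1 = 0
  · left
    refine ⟨((p.1 : ℝ) : AC), ?_⟩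
    have hv2 : v.2 ≠ 0 := by
      intro h2
      apply hv
      have : v = (v.1, v.2) := rfl
      rw [this, hv1, h2]; rfl
    have hLine : {x : ℝ × ℝ | ∃ t : ℝ, x = p + t • v} = {q : ℝ × ℝ | q.1 = p.1} := by
      ext q
      simp only [Set.mem_setOf_eq]
      constructor
      · rintro ⟨t, ht⟩
        rw [mem_line_iff] at ht
        rw [ht.1, hv1]; ring
      · intro h
        refine ⟨(q.2 - p.2)/v.2, ?_⟩
        rw [mem_line_iff]
        constructor
        · rw [h, hv1]; ring
        · field_simp; ring
      
    rw [hLine, Ver_eq_image]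
  · right
    refine ⟨v.2 / v.1, p.2 - (v.2 / v.1) * p.1, ?_⟩
    have hLine : {x : ℝ × ℝ | ∃ t : ℝ, x = p + t • v} =
        {q : ℝ × ℝ | q.2 = v.2/v.1 * q.1 + (p.2 - v.2/v.1 * p.1)} := by
      ext q
      simp only [Set.mem_setOf_eq]
      constructor
      · rintro ⟨t, ht⟩
        rw [mem_line_iff] at ht
        rw [ht.1, ht.2]; field_simp; ring
      · intro h
        refine ⟨(q.1 - p.1)/v.1, ?_⟩
        rw [mem_line_iff]
        constructor
        · field_simp; ring
        · rw [h]; field_simp; ring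
    rw [Hel, hLine]

lemma Hel_slope_eq {m c m' c' : ℝ} (h : Hel m c = Hel m' c') : m = m' := by
  by_contra hne
  have hsub : m - m' ≠ 0 := sub_ne_zero.2 hne
  set S : Set ℝ := Set.range (fun k : ℤ => m' * k + (c' - c)) with hS
  have hSc : S.Countable := Set.countable_range _
  have hpre : ((fun t : ℝ => (m - m') * t) ⁻¹' S).Countable :=
    hSc.preimage (mul_right_injective₀ hsub)
  have : ∃ t₀ : ℝ, t₀ ∉ (fun t : ℝ => (m - m') * t) ⁻¹' S := by
    by_contra hall
    push_neg at hall
    exact Cardinal.not_countable_real (by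
      have : (Set.univ : Set ℝ) ⊆ (fun t : ℝ => (m - m') * t) ⁻¹' S := fun t _ => hall t
      exact Set.Countable.mono this hpre)
  obtain ⟨t₀, ht₀⟩ := this
  have hmem : (((t₀:ℝ):AC), m * t₀ + c) ∈ Hel m' c' := by
    rw [← h]; exact mem_Hel.2 ⟨t₀, rfl⟩
  rcases mem_Hel'.1 hmem with ⟨k, hk⟩
  apply ht₀
  refine ⟨k, ?_⟩
  show m' * k + (c' - c) = (m - m') * t₀
  linarith

lemma Hel_shift {m c : ℝ} (k : ℤ) : Hel m c = Hel m (c + m * k) := by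
  ext ⟨θ, y⟩
  rcases ac_surj θ with ⟨x, rfl⟩
  rw [mem_Hel', mem_Hel']
  constructor
  · rintro ⟨j, hj⟩
    exact ⟨j - k, by push_cast; linarith⟩
  · rintro ⟨j, hj⟩
    exact ⟨j + k, by push_cast at hj ⊢; linarith⟩

lemma Hel_same_slope_eq {m c c' : ℝ} (hne : (Hel m c ∩ Hel m c').Nonempty) :
    Hel m c = Hel m c' := by
  obtain ⟨⟨θ, y⟩, h1, h2⟩ := hne
  rcases ac_surj θ with ⟨x, rfl⟩
  rcases mem_Hel'.1 h1 with ⟨j, hj⟩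
  rcases mem_Hel'.1 h2 with ⟨j', hj'⟩
  have h2 : c' = c + m * ((j - j' : ℤ) : ℝ) := by push_cast; linarith
  rw [h2]
  exact Hel_shift (j - j')

lemma not_singleton_of_infinite {A : Set Cyl} (h : A.Infinite) (p : Cyl) : A ≠ {p} := by
  intro e
  rw [e] at h
  exact h (Set.finite_singleton p)

lemma is_circle_of_meets_once {X Y : Set Cyl}
    (hXV : (∃ θ, X = Ver θ) ∨ (∃ m c, m ≠ 0 ∧ X = Hel m c))
    (hY : (∃ θ, Y = Ver θ) ∨ (∃ m c, Y = Hel m c))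
    (hsing : ∃ pt, Y ∩ X = {pt}) : ∃ s, Y = Cir s := by
  obtain ⟨pt, hpt⟩ := hsing
  rcases hY with ⟨θ', rfl⟩ | ⟨m', c', rfl⟩
  · exfalso
    rcases hXV with ⟨θ, rfl⟩ | ⟨m, c, hm, rfl⟩
    · by_cases hθ : θ' = θ
      · subst hθ
        rw [Set.inter_self] at hpt
        exact not_singleton_of_infinite (Ver_infinite θ') pt hpt
      · rw [Ver_disj hθ] at hpt
        exact (Set.singleton_ne_empty pt) hpt.symm
    · rcases ac_surj θ' with ⟨x, rfl⟩
      exact not_singleton_of_infinite (Ver_inter_Hel_infinite hm x c) pt hpt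
  · by_cases hm' : m' = 0
    · exact ⟨c', by rw [hm', Hel_zero]⟩
    exfalso
    rcases hXV with ⟨θ, rfl⟩ | ⟨m, c, hm, rfl⟩
    · rcases ac_surj θ with ⟨x, rfl⟩
      have hinf := Ver_inter_Hel_infinite hm' x c'
      rw [Set.inter_comm] at hinf
      exact not_singleton_of_infinite hinf pt hpt
    · by_cases hmm : m' = m
      · subst hmm
        have hne : (Hel m' c' ∩ Hel m' c).Nonempty := by
          rw [hpt]; exact ⟨pt, rfl⟩
        have heq := Hel_same_slope_eq hne
        rw [heq, Set.inter_self] at hpt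
        exact not_singleton_of_infinite (Hel_infinite m' c) pt hpt
      · exact not_singleton_of_infinite (Hel_inter_Hel_infinite hm' hm hmm c' c) pt hpt

lemma ac_zero : ((0:ℝ):AC) = (0:AC) := rfl

section MainArg
variable {f : Cyl → Cyl} (hbij : Function.Bijective f)
    (hgeo : ∀ G : Set Cyl, IsCylGeodesic G → IsCylGeodesic (f '' G))

include hbij hgeo

lemma img_inter (A B : Set Cyl) : f '' (A ∩ B) = f '' A ∩ f '' B :=
  Set.image_inter hbij.1

lemma img_inj {A B : Set Cyl} (h : f '' A = f '' B) : A = B :=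
  Set.image_injective.2 hbij.1 h

lemma stepA : ∀ r : ℝ, ∃ s : ℝ, f '' Cir r = Cir s := by
  intro r
  have hX := geodesic_cases (hgeo _ (Cir_geodesic r))
  have hXV : (∃ θ, f '' Cir r = Ver θ) ∨ (∃ m c, m ≠ 0 ∧ f '' Cir r = Hel m c) → False := by
    rintro hcase
    have key : ∀ m₀ : ℝ, m₀ ≠ 0 → ∃ s, f '' Hel m₀ 0 = Cir s := by
      intro m₀ hm₀
      apply is_circle_of_meets_once hcase
        (geodesic_cases (hgeo _ (Hel_geodesic m₀ 0)))
      refine ⟨f ((((r - 0)/m₀ :ℝ):AC), r), ?_⟩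
      rw [← img_inter hbij hgeo, Hel_inter_Cir hm₀ 0 r, Set.image_singleton]
    obtain ⟨c₁, hc₁⟩ := key 1 one_ne_zero
    obtain ⟨c₂, hc₂⟩ := key 2 two_ne_zero
    have hinf : (f '' Hel 1 0 ∩ f '' Hel 2 0).Infinite := by
      rw [← img_inter hbij hgeo]
      exact (Hel_inter_Hel_infinite one_ne_zero two_ne_zero (by norm_num) 0 0).image
        (hbij.1.injOn)
    have hcc : c₁ = c₂ := by
      by_contra hne
      rw [hc₁, hc₂, Cir_disj hne] at hinf
      exact hinf Set.finite_empty
    have : Hel 1 0 = Hel 2 0 := img_inj hbij hgeo (by rw [hc₁, hc₂, hcc])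
    have := Hel_slope_eq this
    norm_num at this
  rcases hX with ⟨θ, hθ⟩ | ⟨m, c, hmc⟩
  · exact absurd (Or.inl ⟨θ, hθ⟩) hXV
  · by_cases hm : m = 0
    · exact ⟨c, by rw [hmc, hm, Hel_zero]⟩
    · exact absurd (Or.inr ⟨m, c, hm, hmc⟩) hXV

lemma stepA' : ∀ r : ℝ, f '' Cir r = Cir ((f ((0:AC), r)).2) := by
  intro r
  obtain ⟨s, hs⟩ := stepA hbij hgeo r
  have hmem : f ((0:AC), r) ∈ Cir s := by
    rw [← hs]
    exact ⟨((0:AC), r), rfl, rfl⟩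
  have : (f ((0:AC), r)).2 = s := hmem
  rw [hs, this]

lemma hsnd : ∀ p : Cyl, (f p).2 = (f ((0:AC), p.2)).2 := by
  intro p
  have h1 : f p ∈ f '' Cir p.2 := ⟨p, rfl, rfl⟩
  rw [stepA' hbij hgeo] at h1
  exact h1

lemma ginj : Function.Injective (fun r : ℝ => (f ((0:AC), r)).2) := by
  intro r s h
  simp only at h
  have : f '' Cir r = f '' Cir s := by
    rw [stepA' hbij hgeo, stepA' hbij hgeo, h]
  have := img_inj hbij hgeo this
  have : ((0:AC), r) ∈ Cir s := this ▸ (rfl : ((0:AC), r) ∈ Cir r)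
  exact this

lemma gsurj : Function.Surjective (fun r : ℝ => (f ((0:AC), r)).2) := by
  intro s
  obtain ⟨p, hp⟩ := hbij.2 ((0:AC), s)
  refine ⟨p.2, ?_⟩
  have := hsnd hbij hgeo p
  simp only
  rw [← this, hp]

lemma img_not_circle {A : Set Cyl}
    (hA : (∃ θ, A = Ver θ) ∨ (∃ m c, m ≠ 0 ∧ A = Hel m c)) :
    ∀ s : ℝ, f '' A ≠ Cir s := by
  intro s hAs
  have key : ∀ r : ℝ, ∃ pt, A ∩ Cir r = {pt} := by
    intro r
    rcases hA with ⟨θ, rfl⟩ | ⟨m, c, hm, rfl⟩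
    · rcases ac_surj θ with ⟨x, rfl⟩
      exact ⟨_, Ver_inter_Cir x r⟩
    · exact ⟨_, Hel_inter_Cir hm c r⟩
  have key2 : ∀ r : ℝ, s = (f ((0:AC), r)).2 := by
    intro r
    obtain ⟨pt, hpt⟩ := key r
    have h2 : f '' A ∩ f '' Cir r = {f pt} := by
      rw [← img_inter hbij hgeo, hpt, Set.image_singleton]
    rw [hAs, stepA' hbij hgeo] at h2
    have : f pt ∈ Cir s ∩ Cir ((f ((0:AC), r)).2) := by rw [h2]; rfl
    have h3 : (Cir s ∩ Cir ((f ((0:AC), r)).2)).Nonempty := ⟨f pt, this⟩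
    by_contra hne
    rw [Cir_disj hne] at h3
    exact Set.not_nonempty_empty h3
  have h0 := key2 0
  have h1 := key2 1
  have : (0:ℝ) = 1 := ginj hbij hgeo (by simp only; rw [← h0, ← h1])
  norm_num at this

lemma stepB (hV0 : f '' Ver (0:AC) = Ver (0:AC)) :
    ∀ θ : AC, f '' Ver θ = Ver ((f (θ, 0)).1) := by
  intro θ
  rcases geodesic_cases (hgeo _ (Ver_geodesic θ)) with ⟨θ'', h⟩ | ⟨m, c, h⟩
  · have hmem : f (θ, 0) ∈ Ver θ'' := h ▸ ⟨(θ, 0), rfl, rfl⟩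
    have : (f (θ, 0)).1 = θ'' := hmem
    rw [h, this]
  · exfalso
    by_cases hm : m = 0
    · rw [hm, Hel_zero] at h
      exact img_not_circle hbij hgeo (Or.inl ⟨θ, rfl⟩) c h
    · by_cases hθ : θ = 0
      · subst hθ
        rw [hV0] at h
        exact Ver_ne_Hel hm h
      · have hdisj : f '' Ver (0:AC) ∩ f '' Ver θ = ∅ := by
          rw [← img_inter hbij hgeo, Ver_disj (Ne.symm hθ), Set.image_empty]
        rw [hV0, h] at hdisj
        have hinf : (Ver (0:AC) ∩ Hel m c).Infinite := by
          rw [← ac_zero]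
          exact Ver_inter_Hel_infinite hm 0 c
        rw [hdisj] at hinf
        exact hinf Set.finite_empty

lemma hfst (hV0 : f '' Ver (0:AC) = Ver (0:AC)) :
    ∀ p : Cyl, (f p).1 = (f (p.1, 0)).1 := by
  intro p
  have h1 : f p ∈ f '' Ver p.1 := ⟨p, rfl, rfl⟩
  rw [stepB hbij hgeo hV0] at h1
  exact h1

lemma psiinj (hV0 : f '' Ver (0:AC) = Ver (0:AC)) :
    ∀ θ θ' : AC, (f (θ, 0)).1 = (f (θ', 0)).1 → θ = θ' := by
  intro θ θ' h
  have : f '' Ver θ = f '' Ver θ' := by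
    rw [stepB hbij hgeo hV0, stepB hbij hgeo hV0, h]
  have h2 := img_inj hbij hgeo this
  have : (θ, (0:ℝ)) ∈ Ver θ' := h2 ▸ (rfl : (θ, (0:ℝ)) ∈ Ver θ)
  exact this

lemma stepC (hV0 : f '' Ver (0:AC) = Ver (0:AC)) :
    ∀ m : ℝ, m ≠ 0 → ∀ c : ℝ, ∃ M C : ℝ, M ≠ 0 ∧ f '' Hel m c = Hel M C := by
  intro m hm c
  rcases geodesic_cases (hgeo _ (Hel_geodesic m c)) with ⟨θ', h⟩ | ⟨M, C, h⟩
  · exfalso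
    have hps : (f ((0:AC), 0)).1 ≠ (f ((((1:ℝ)/2:ℝ):AC), 0)).1 := by
      intro he
      have h2 := psiinj hbij hgeo hV0 _ _ he
      rw [← ac_zero] at h2
      exact half_ne h2
    have key : ∀ θ'' : AC, (f (θ'', 0)).1 ≠ θ' → False := by
      intro θ'' hne
      rcases ac_surj θ'' with ⟨x, rfl⟩
      have hinf : (Ver ((x:ℝ):AC) ∩ Hel m c).Infinite := Ver_inter_Hel_infinite hm x c
      have hne2 : (f '' (Ver ((x:ℝ):AC) ∩ Hel m c)).Nonempty :=
        (hinf.nonempty).image f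
      rw [img_inter hbij hgeo, stepB hbij hgeo hV0, h] at hne2
      rw [Ver_disj hne] at hne2
      exact Set.not_nonempty_empty hne2
    by_cases h0 : (f ((0:AC), 0)).1 = θ'
    · apply key ((((1:ℝ)/2:ℝ):AC))
      rw [← h0]
      exact fun he => hps he.symm
    · exact key 0 h0
  · by_cases hM : M = 0
    · exfalso
      rw [hM, Hel_zero] at h
      exact img_not_circle hbij hgeo (Or.inr ⟨m, c, hm, rfl⟩) C h
    · exact ⟨M, C, hM, h⟩

end MainArg

/-! ### Translations and shears -/

def Tsl (u v : ℝ) : Cyl → Cyl := fun p => (p.1 + ((u:ℝ):AC), p.2 + v)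

def Shr (β : ℝ) : Cyl → Cyl := fun p => (p.1 + ((β * p.2 :ℝ):AC), p.2)

lemma Tsl_Tsl (u v : ℝ) (p : Cyl) : Tsl u v (Tsl (-u) (-v) p) = p := by
  simp only [Tsl]
  rw [Prod.ext_iff]
  constructor
  · show p.1 + ↑(-u:ℝ) + ↑u = p.1
    rw [add_assoc, ← AddCircle.coe_add]
    norm_num
  · show p.2 + -v + v = p.2
    ring

lemma Tsl_Tsl' (u v : ℝ) (p : Cyl) : Tsl (-u) (-v) (Tsl u v p) = p := by
  have := Tsl_Tsl (-u) (-v) p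
  rw [neg_neg, neg_neg] at this
  exact this

lemma Tsl_bij (u v : ℝ) : Function.Bijective (Tsl u v) := by
  constructor
  · intro p q h
    have h1 := congrArg (Tsl (-u) (-v)) h
    rw [Tsl_Tsl', Tsl_Tsl'] at h1
    exact h1
  · intro q
    exact ⟨Tsl (-u) (-v) q, Tsl_Tsl u v q⟩

lemma Shr_Shr (β : ℝ) (p : Cyl) : Shr β (Shr (-β) p) = p := by
  simp only [Shr]
  rw [Prod.ext_iff]
  constructor
  · show p.1 + ↑(-β * p.2) + ↑(β * p.2) = p.1
    rw [add_assoc, ← AddCircle.coe_add]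
    norm_num
  · rfl

lemma Shr_Shr' (β : ℝ) (p : Cyl) : Shr (-β) (Shr β p) = p := by
  have := Shr_Shr (-β) p
  rw [neg_neg] at this
  exact this

lemma Shr_bij (β : ℝ) : Function.Bijective (Shr β) := by
  constructor
  · intro p q h
    have h1 := congrArg (Shr (-β)) h
    rw [Shr_Shr', Shr_Shr'] at h1
    exact h1
  · intro q
    exact ⟨Shr (-β) q, Shr_Shr β q⟩

lemma Tsl_π (u v : ℝ) (q : ℝ × ℝ) : Tsl u v (cylπ q) = cylπ (q.1 + u, q.2 + v) := by
  simp only [Tsl, cylπ]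
  rw [Prod.ext_iff]
  exact ⟨(AddCircle.coe_add 1 q.1 u).symm, rfl⟩

lemma Shr_π (β : ℝ) (q : ℝ × ℝ) : Shr β (cylπ q) = cylπ (q.1 + β * q.2, q.2) := by
  simp only [Shr, cylπ]
  rw [Prod.ext_iff]
  exact ⟨(AddCircle.coe_add 1 q.1 (β * q.2)).symm, rfl⟩

lemma gp_of_commute {φ : Cyl → Cyl} {E : ℝ × ℝ → ℝ × ℝ}
    (hcomm : ∀ q, φ (cylπ q) = cylπ (E q))
    (hline : ∀ L : Set (ℝ × ℝ), IsLine L → IsLine (E '' L)) :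
    ∀ G : Set Cyl, IsCylGeodesic G → IsCylGeodesic (φ '' G) := by
  rintro G ⟨L, hL, rfl⟩
  refine ⟨E '' L, hline L hL, ?_⟩
  rw [Set.image_image, Set.image_image]
  exact Set.image_congr fun q _ => hcomm q

lemma affine_line {E : ℝ × ℝ → ℝ × ℝ} {T : ℝ × ℝ → ℝ × ℝ} {w : ℝ × ℝ}
    (hT : IsLinearMap ℝ T) (hTinj : ∀ x, T x = 0 → x = 0)
    (hE : ∀ q, E q = T q + w) :
    ∀ L : Set (ℝ × ℝ), IsLine L → IsLine (E '' L) := by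
  rintro L ⟨p, v, hv, rfl⟩
  refine ⟨T p + w, T v, fun h => hv (hTinj v h), ?_⟩
  ext q
  constructor
  · rintro ⟨x, ⟨t, rfl⟩, rfl⟩
    refine ⟨t, ?_⟩
    rw [hE, hT.map_add, hT.map_smul]
    abel
  · rintro ⟨t, rfl⟩
    refine ⟨p + t • v, ⟨t, rfl⟩, ?_⟩
    rw [hE, hT.map_add, hT.map_smul]
    abel

lemma Tsl_gp (u v : ℝ) :
    ∀ G : Set Cyl, IsCylGeodesic G → IsCylGeodesic (Tsl u v '' G) := by
  apply gp_of_commute (E := fun q => (q.1 + u, q.2 + v)) (Tsl_π u v)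
  apply affine_line (T := id) (w := (u, v))
  · exact ⟨fun a b => rfl, fun c x => rfl⟩
  · intro x h; exact h
  · intro q; rfl

lemma Shr_lin (β : ℝ) : IsLinearMap ℝ (fun q : ℝ × ℝ => ((q.1 + β * q.2 : ℝ), q.2)) := by
  constructor
  · intro a b
    rw [Prod.ext_iff]
    constructor
    · show (a + b).1 + β * (a + b).2 = (a.1 + β * a.2) + (b.1 + β * b.2)
      simp [Prod.fst_add, Prod.snd_add]; ring
    · rfl
  · intro c x
    rw [Prod.ext_iff]
    constructor
    · show (c • x).1 + β * (c • x).2 = c * (x.1 + β * x.2)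
      simp [smul_eq_mul]; ring
    · rfl

lemma Shr_gp (β : ℝ) :
    ∀ G : Set Cyl, IsCylGeodesic G → IsCylGeodesic (Shr β '' G) := by
  apply gp_of_commute (E := fun q => (q.1 + β * q.2, q.2)) (Shr_π β)
  apply affine_line (T := fun q : ℝ × ℝ => ((q.1 + β * q.2 : ℝ), q.2)) (w := (0,0))
  · exact Shr_lin β
  · intro x h
    rw [Prod.ext_iff] at h
    obtain ⟨h1, h2⟩ := h
    have h2' : x.2 = 0 := h2
    have h1' : x.1 + β * x.2 = 0 := h1
    rw [Prod.ext_iff]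
    exact ⟨by rw [h2'] at h1'; simpa using h1', h2'⟩
  · intro q; rw [Prod.ext_iff]; exact ⟨(add_zero _).symm, (add_zero _).symm⟩

lemma main_reduced {f : Cyl → Cyl} (hbij : Function.Bijective f)
    (hgeo : ∀ G : Set Cyl, IsCylGeodesic G → IsCylGeodesic (f '' G))
    (horigin : f ((0:AC), (0:ℝ)) = ((0:AC), (0:ℝ)))
    (hV0 : f '' Ver (0:AC) = Ver (0:AC)) :
    ∃ σ a : ℝ, (σ = 1 ∨ σ = -1) ∧ a ≠ 0 ∧
      ∀ x y : ℝ, f (cylπ (x, y)) = cylπ (σ * x, a * y) := by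
  classical
  set g : ℝ → ℝ := fun r => (f ((0:AC), r)).2 with hgdef
  set ψ : AC → AC := fun θ => (f (θ, 0)).1 with hψdef
  have hg0 : g 0 = 0 := by
    show (f ((0:AC), 0)).2 = 0
    rw [horigin]
  have hψ0 : ψ (0:AC) = 0 := by
    show (f ((0:AC), 0)).1 = 0
    rw [horigin]
  have hsnd' : ∀ p : Cyl, (f p).2 = g p.2 := hsnd hbij hgeo
  have hfst' : ∀ p : Cyl, (f p).1 = ψ p.1 := hfst hbij hgeo hV0
  have hginj : Function.Injective g := ginj hbij hgeo
  have hψinj : ∀ θ θ', ψ θ = ψ θ' → θ = θ' := psiinj hbij hgeo hV0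
  have hfp : ∀ p : Cyl, f p = (ψ p.1, g p.2) := by
    intro p
    rw [Prod.ext_iff]
    exact ⟨hfst' p, hsnd' p⟩
  choose M C hM0 hMC using stepC hbij hgeo hV0
  have horigin_mem : ∀ m : ℝ, ((0:AC), (0:ℝ)) ∈ Hel m 0 := by
    intro m
    refine mem_Hel.2 ⟨0, ?_⟩
    rw [Prod.ext_iff]
    exact ⟨rfl, by ring⟩
  have himg0 : ∀ m (hm : m ≠ 0), f '' Hel m 0 = Hel (M m hm 0) 0 := by
    intro m hm
    have h1 := hMC m hm 0
    have h2 : f ((0:AC), (0:ℝ)) ∈ Hel (M m hm 0) (C m hm 0) := by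
      rw [← h1]; exact ⟨_, horigin_mem m, rfl⟩
    rw [horigin] at h2
    rcases mem_Hel.1 h2 with ⟨s, hs⟩
    have hs1 : (0:AC) = ((s:ℝ):AC) := congrArg Prod.fst hs
    have hs2 : (0:ℝ) = M m hm 0 * s + C m hm 0 := congrArg Prod.snd hs
    rcases coe_eq_zero.1 hs1.symm with ⟨kk, hkk⟩
    have hCval : C m hm 0 = 0 + (M m hm 0) * ((-kk : ℤ):ℝ) := by
      push_cast
      rw [hkk] at hs2
      linarith
    rw [h1, hCval]
    exact (Hel_shift (-kk)).symm
  have hMinj : ∀ m m' (hm : m ≠ 0) (hm' : m' ≠ 0), M m hm 0 = M m' hm' 0 → m = m' := by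
    intro m m' hm hm' h
    have : f '' Hel m 0 = f '' Hel m' 0 := by rw [himg0 m hm, himg0 m' hm', h]
    exact Hel_slope_eq (img_inj hbij hgeo this)
  have hMc : ∀ m (hm : m ≠ 0) (c c' : ℝ), M m hm c = M m hm c' := by
    intro m hm c c'
    by_cases hne : (Hel m c ∩ Hel m c').Nonempty
    · have heq := Hel_same_slope_eq hne
      have : Hel (M m hm c) (C m hm c) = Hel (M m hm c') (C m hm c') := by
        rw [← hMC m hm c, ← hMC m hm c', heq]
      exact Hel_slope_eq this
    · have hdisj : Hel (M m hm c) (C m hm c) ∩ Hel (M m hm c') (C m hm c') = ∅ := by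
        rw [← hMC m hm c, ← hMC m hm c', ← img_inter hbij hgeo,
          Set.not_nonempty_iff_eq_empty.1 hne, Set.image_empty]
      by_contra hMne
      have hinf := Hel_inter_Hel_infinite (hM0 m hm c) (hM0 m hm c') hMne (C m hm c) (C m hm c')
      rw [hdisj] at hinf
      exact hinf Set.finite_empty
  have hstar : ∀ m (hm : m ≠ 0) (c t : ℝ),
      ψ ((t:ℝ):AC) = (((g (m*t+c) - C m hm c)/(M m hm c) : ℝ) : AC) := by
    intro m hm c t
    have hmem : ((((t:ℝ)):AC), m*t+c) ∈ Hel m c := mem_Hel.2 ⟨t, rfl⟩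
    have h2 : f ((((t:ℝ)):AC), m*t+c) ∈ Hel (M m hm c) (C m hm c) := by
      rw [← hMC m hm c]; exact ⟨_, hmem, rfl⟩
    rcases mem_Hel.1 h2 with ⟨s, hs⟩
    rw [hfp] at hs
    have hs1 : ψ ((t:ℝ):AC) = ((s:ℝ):AC) := congrArg Prod.fst hs
    have hs2 : g (m*t+c) = M m hm c * s + C m hm c := congrArg Prod.snd hs
    have hsv : s = (g (m*t+c) - C m hm c)/(M m hm c) := by
      rw [eq_div_iff (hM0 m hm c)]
      linarith
    rw [hs1, hsv]
  have hstar' : ∀ m (hm : m ≠ 0) (c t : ℝ),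
      ψ ((t:ℝ):AC) = (((g (m*t+c) - g c)/(M m hm c) : ℝ) : AC) := by
    intro m hm c t
    have h0 := hstar m hm c 0
    rw [show m*0+c = c by ring] at h0
    rw [show (((0:ℝ)):AC) = (0:AC) from rfl, hψ0] at h0
    rcases coe_eq_zero.1 h0.symm with ⟨k, hk⟩
    have hdec : (g (m*t+c) - C m hm c)/(M m hm c)
        = (g (m*t+c) - g c)/(M m hm c) + ((k:ℤ):ℝ) := by
      rw [← hk]; ring
    have hst := hstar m hm c t
    rw [hdec, AddCircle.coe_add,
      show ((((k:ℤ):ℝ)):AC) = 0 from coe_eq_zero.2 ⟨k, rfl⟩, add_zero] at hst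
    exact hst
  set A : ℝ := M 1 one_ne_zero 0 with hAdef
  have hA0 : A ≠ 0 := hM0 1 one_ne_zero 0
  have hpsig : ∀ t : ℝ, ψ ((t:ℝ):AC) = ((g t / A : ℝ):AC) := by
    intro t
    have h1 := hstar' 1 one_ne_zero 0 t
    rw [show (1:ℝ)*t+0 = t by ring, hg0, sub_zero] at h1
    exact h1
  have hE : ∀ m (hm : m ≠ 0) (c t : ℝ),
      ∃ k : ℤ, (g (m*t+c) - g c)/(M m hm 0) - g t / A = (k:ℝ) := by
    intro m hm c t
    have h1 := hstar' m hm c t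
    rw [hMc m hm c 0] at h1
    have h2 := hpsig t
    have h3 := h1.symm.trans h2
    rcases coe_eq_iff.1 h3 with ⟨k, hk⟩
    exact ⟨-k, by push_cast; linarith⟩
  -- additivity of g
  have hadd : ∀ t c : ℝ, g (t + c) = g t + g c := by
    intro t c
    by_contra hne
    set D : ℝ := g (t + c) - g t - g c with hD
    have hDne : D ≠ 0 := fun h => hne (by rw [hD] at h; linarith)
    have hDm : ∀ m (hm : m ≠ 0), ∃ k : ℤ, D = M m hm 0 * k := by
      intro m hm
      obtain ⟨k1, hk1⟩ := hE m hm c (t/m)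
      obtain ⟨k2, hk2⟩ := hE m hm 0 (t/m)
      have hmt : m * (t/m) + c = t + c := by field_simp
      have hmt0 : m * (t/m) + 0 = t := by field_simp; ring
      rw [hmt] at hk1
      rw [hmt0, hg0, sub_zero] at hk2
      have h3 : (g (t+c) - g c)/(M m hm 0) - g t/(M m hm 0) = (k1:ℝ) - k2 := by linarith
      have h4 : D / (M m hm 0) = (k1:ℝ) - k2 := by
        rw [hD, sub_div, sub_div]
        rw [sub_div] at h3
        linarith
      refine ⟨k1 - k2, ?_⟩
      push_cast
      rw [← h4]
      field_simp
      rw [div_self (hM0 m hm 0)]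
    set F : ℝ → ℝ := fun m => if hm : m = 0 then 0 else M m hm 0 with hF
    have hFval : ∀ m (hm : m ≠ 0), F m = M m hm 0 := by
      intro m hm
      rw [hF]
      exact dif_neg hm
    have hF0 : F 0 = 0 := by
      simp [hF]
    have hFinj : Function.Injective F := by
      intro m m' h
      by_cases hm : m = 0 <;> by_cases hm' : m' = 0
      · rw [hm, hm']
      · exfalso
        rw [hm, hF0, hFval m' hm'] at h
        exact hM0 m' hm' 0 h.symm
      · exfalso
        rw [hm', hF0, hFval m hm] at h
        exact hM0 m hm 0 h
      · rw [hFval m hm, hFval m' hm'] at h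
        exact hMinj m m' hm hm' h
    set S : Set ℝ := Set.range (fun k : ℤ => D / k) with hS
    have hmemS : ∀ m : ℝ, m ≠ 0 → F m ∈ S := by
      intro m hm
      obtain ⟨k, hk⟩ := hDm m hm
      have hk0 : (k:ℝ) ≠ 0 := by
        intro h0
        rw [h0, mul_zero] at hk
        exact hDne hk
      refine ⟨k, ?_⟩
      show D / (k:ℝ) = F m
      rw [hFval m hm, hk]
      field_simp
    have hcount : (Set.univ : Set ℝ).Countable := by
      have h1 : (Set.univ : Set ℝ) ⊆ insert 0 (F ⁻¹' S) := by
        intro m _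
        by_cases hm : m = 0
        · rw [hm]; exact Set.mem_insert 0 _
        · exact Set.mem_insert_of_mem _ (hmemS m hm)
      exact Set.Countable.mono h1 (((Set.countable_range _).preimage hFinj).insert 0)
    exact Cardinal.not_countable_real hcount
  -- multiplicativity
  have hmul0 : ∀ m (hm : m ≠ 0) (t : ℝ), g (m * t) = (M m hm 0) / A * g t := by
    intro m hm t
    have hκint : ∀ u : ℝ, ∃ k : ℤ, g (m * u)/(M m hm 0) - g u / A = (k:ℝ) := by
      intro u
      obtain ⟨k, hk⟩ := hE m hm 0 u
      rw [show m*u+0 = m*u by ring, hg0, sub_zero] at hk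
      exact ⟨k, hk⟩
    obtain ⟨k, hk⟩ := hκint t
    have key : ∀ n : ℕ, ∃ j : ℤ,
        (g (m * (t / 2^n)) / (M m hm 0) - g (t / 2^n) / A = (j:ℝ)) ∧ k = 2^n * j := by
      intro n
      induction n with
      | zero =>
        refine ⟨k, ?_, by ring⟩
        rw [pow_zero, div_one]
        exact hk
      | succ n ih =>
        obtain ⟨j, hj1, hj2⟩ := ih
        obtain ⟨j', hj'⟩ := hκint (t / 2^(n+1))
        have hsplit : t / 2^n = t / 2^(n+1) + t / 2^(n+1) := by
          field_simp
          ring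
        have hg2 : g (t / 2^n) = 2 * g (t / 2^(n+1)) := by
          rw [hsplit, hadd]; ring
        have hgm2 : g (m * (t / 2^n)) = 2 * g (m * (t / 2^(n+1))) := by
          rw [hsplit, mul_add, hadd]; ring
        have hjj : (j:ℝ) = 2 * (j':ℝ) := by
          rw [← hj1, hgm2, hg2, ← hj']; ring
        have hjj' : j = 2 * j' := by exact_mod_cast hjj
        exact ⟨j', hj', by rw [hj2, hjj']; ring⟩
    have hk0 : k = 0 := by
      by_contra hkne
      obtain ⟨j, _, hj2⟩ := key (k.natAbs)
      have hdvd : (2^(k.natAbs) : ℤ) ∣ k := ⟨j, hj2⟩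
      have hle : (2^(k.natAbs) : ℤ) ≤ |k| :=
        Int.le_of_dvd (abs_pos.2 hkne) ((dvd_abs _ _).2 hdvd)
      have hlt : ((k.natAbs : ℕ) : ℤ) < 2^(k.natAbs) := by
        have := Nat.lt_two_pow_self (n := k.natAbs)
        exact_mod_cast this
      have habs : |k| = ((k.natAbs : ℕ) : ℤ) := Int.abs_eq_natAbs k
      rw [habs] at hle
      linarith
    rw [hk0] at hk
    push_cast at hk
    have : g (m * t)/(M m hm 0) = g t / A := by linarith
    rw [div_eq_iff (hM0 m hm 0)] at this
    rw [this]; ring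
  have ha0 : g 1 ≠ 0 := by
    intro h
    have := hginj (h.trans hg0.symm)
    norm_num at this
  set a : ℝ := g 1 with hadef
  have hMA : ∀ m (hm : m ≠ 0), M m hm 0 = A * g m / a := by
    intro m hm
    have h1 := hmul0 m hm 1
    rw [mul_one] at h1
    rw [eq_div_iff ha0]
    rw [h1]
    field_simp
    rw [hadef]
  have hmul : ∀ x t : ℝ, g (x * t) = g x * g t / a := by
    intro x t
    by_cases hx : x = 0
    · rw [hx, zero_mul, hg0, zero_mul, zero_div]
    · rw [hmul0 x hx t, hMA x hx]
      field_simp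
  let Φ : ℝ →+* ℝ :=
  { toFun := fun x => g x / a
    map_one' := by field_simp; exact hadef.symm
    map_mul' := by
      intro x y
      rw [hmul x y]
      field_simp
    map_zero' := by rw [hg0, zero_div]
    map_add' := by
      intro x y
      rw [hadd x y]
      ring }
  have hΦ : ∀ x : ℝ, g x / a = x := by
    intro x
    have h1 : Φ = RingHom.id ℝ := Subsingleton.elim _ _
    exact RingHom.congr_fun h1 x
  have hglin : ∀ y : ℝ, g y = a * y := by
    intro y
    have h := hΦ y
    rw [div_eq_iff ha0] at h
    rw [h]; ring
  set ρ : ℝ := a / A with hρdef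
  have hρ0 : ρ ≠ 0 := div_ne_zero ha0 hA0
  have hψρ : ∀ t : ℝ, ψ ((t:ℝ):AC) = ((ρ * t :ℝ):AC) := by
    intro t
    rw [hpsig t, hglin t]
    congr 1
    rw [hρdef]; ring
  have hcoe1 : (((1:ℝ)):AC) = 0 := AddCircle.coe_period 1
  obtain ⟨k, hkρ⟩ : ∃ k : ℤ, ρ = (k:ℝ) := by
    have h1 := hψρ 1
    rw [mul_one, hcoe1, hψ0] at h1
    exact coe_eq_zero.1 h1.symm
  have hk1 : k = 1 ∨ k = -1 := by
    have h2 := hψρ (1/ρ)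
    rw [mul_one_div, div_self hρ0, hcoe1] at h2
    have h3 : (((1/ρ : ℝ)):AC) = (0:AC) := by
      apply hψinj
      rw [h2, hψ0]
    obtain ⟨j, hj⟩ := coe_eq_zero.1 h3
    have hmulkj : (k : ℝ) * j = 1 := by
      rw [← hkρ, ← hj]
      field_simp
    have hint : k * j = 1 := by exact_mod_cast hmulkj
    exact Int.isUnit_iff.1 (IsUnit.of_mul_eq_one (a := k) j hint)
  refine ⟨ρ, a, ?_, ha0, ?_⟩
  · rcases hk1 with h | h
    · left; rw [hkρ, h]; norm_num
    · right; rw [hkρ, h]; norm_num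
  · intro x y
    have hπ : cylπ (x, y) = (((x:ℝ):AC), y) := rfl
    rw [hπ, hfp]
    show (ψ ((x:ℝ):AC), g y) = cylπ (ρ * x, a * y)
    rw [hψρ x, hglin y]
    rfl

lemma Shr_zero : Shr (0:ℝ) = id := by
  funext p
  show (p.1 + (((0:ℝ) * p.2 :ℝ):AC), p.2) = p
  rw [zero_mul]
  show (p.1 + ((0:ℝ):AC), p.2) = p
  rw [ac_zero, add_zero]

lemma Shr_Hel {m : ℝ} (hm : m ≠ 0) : Shr (-(1/m)) '' Hel m 0 = Ver (0:AC) := by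
  rw [Hel]
  rw [Set.image_image]
  have hgp : ∀ q : ℝ × ℝ, Shr (-(1/m)) (cylπ q) = cylπ (q.1 + (-(1/m)) * q.2, q.2) :=
    Shr_π (-(1/m))
  have h1 : (fun q : ℝ × ℝ => Shr (-(1/m)) (cylπ q)) '' {q : ℝ × ℝ | q.2 = m * q.1 + 0}
      = cylπ '' ((fun q : ℝ × ℝ => ((q.1 + (-(1/m)) * q.2 : ℝ), q.2)) '' {q | q.2 = m * q.1 + 0}) := by
    rw [Set.image_image]
    exact Set.image_congr fun q _ => hgp q
  rw [h1]
  have h2 : (fun q : ℝ × ℝ => ((q.1 + (-(1/m)) * q.2 : ℝ), q.2)) '' {q : ℝ × ℝ | q.2 = m * q.1 + 0}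
      = {q : ℝ × ℝ | q.1 = 0} := by
    ext ⟨u, v⟩
    constructor
    · rintro ⟨⟨qx, qy⟩, hq, heq⟩
      have hq' : qy = m * qx + 0 := hq
      rw [Prod.ext_iff] at heq
      obtain ⟨he1, he2⟩ := heq
      have he1' : qx + -(1/m) * qy = u := he1
      show u = 0
      rw [← he1', hq']
      field_simp
      ring
    · intro h
      have h' : u = 0 := h
      refine ⟨(v/m, v), ?_, ?_⟩
      · show v = m * (v/m) + 0
        field_simp
        ring
      · rw [Prod.ext_iff]
        constructor
        · show v/m + (-(1/m)) * v = u
          rw [h']; field_simp; ring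
        · rfl
  rw [h2, ← ac_zero, Ver_eq_image]

theorem cylinder_classification (f : Cyl → Cyl)
    (hbij : Function.Bijective f)
    (hgeo : ∀ G : Set Cyl, IsCylGeodesic G → IsCylGeodesic (f '' G)) :
    ∃ (σ x₀ α a b : ℝ), (σ = 1 ∨ σ = -1) ∧ a ≠ 0 ∧
      ∀ x y : ℝ, f (cylπ (x, y)) = cylπ (σ * x + α * y + x₀, a * y + b) := by
  classical
  obtain ⟨w1, hw1⟩ := ac_surj (f ((0:AC), (0:ℝ))).1
  set w2 : ℝ := (f ((0:AC), (0:ℝ))).2 with hw2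
  set f₂ : Cyl → Cyl := Tsl (-w1) (-w2) ∘ f with hf₂
  have hbij₂ : Function.Bijective f₂ := (Tsl_bij (-w1) (-w2)).comp hbij
  have hgeo₂ : ∀ G : Set Cyl, IsCylGeodesic G → IsCylGeodesic (f₂ '' G) := by
    intro G hG
    rw [hf₂, Set.image_comp]
    exact Tsl_gp (-w1) (-w2) _ (hgeo G hG)
  have hforig : f ((0:AC), (0:ℝ)) = cylπ (w1, w2) := by
    rw [Prod.ext_iff]
    exact ⟨hw1.symm, rfl⟩
  have horigin₂ : f₂ ((0:AC), (0:ℝ)) = ((0:AC), (0:ℝ)) := by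
    show Tsl (-w1) (-w2) (f ((0:AC), (0:ℝ))) = ((0:AC), (0:ℝ))
    rw [hforig, Tsl_π]
    show cylπ (w1 + -w1, w2 + -w2) = ((0:AC), (0:ℝ))
    rw [show w1 + -w1 = 0 by ring, show w2 + -w2 = 0 by ring]
    rfl
  have horigmem : ((0:AC), (0:ℝ)) ∈ f₂ '' Ver (0:AC) :=
    ⟨((0:AC), (0:ℝ)), rfl, horigin₂⟩
  have hβ : ∃ β : ℝ, (Shr β ∘ f₂) '' Ver (0:AC) = Ver (0:AC) := by
    rcases geodesic_cases (hgeo₂ _ (Ver_geodesic 0)) with ⟨θ, hθ⟩ | ⟨m, c, hmc⟩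
    · refine ⟨0, ?_⟩
      rw [Set.image_comp, hθ, Shr_zero, Set.image_id]
      have : (0:AC) = θ := by
        rw [hθ] at horigmem
        exact horigmem
      rw [← this]
    · have hm : m ≠ 0 := by
        intro h0
        rw [h0, Hel_zero] at hmc
        exact img_not_circle hbij₂ hgeo₂ (Or.inl ⟨0, rfl⟩) c hmc
      have hc0 : Hel m c = Hel m 0 := by
        rw [hmc] at horigmem
        rcases mem_Hel.1 horigmem with ⟨s, hs⟩
        have hs1 : (0:AC) = ((s:ℝ):AC) := congrArg Prod.fst hs
        have hs2 : (0:ℝ) = m * s + c := congrArg Prod.snd hs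
        rcases coe_eq_zero.1 hs1.symm with ⟨kk, hkk⟩
        have : c = 0 + m * ((-kk : ℤ):ℝ) := by
          push_cast
          rw [hkk] at hs2
          linarith
        rw [this]
        exact (Hel_shift (-kk)).symm
      refine ⟨-(1/m), ?_⟩
      rw [Set.image_comp, hmc, hc0]
      exact Shr_Hel hm
  obtain ⟨β, hβV⟩ := hβ
  set f₁ : Cyl → Cyl := Shr β ∘ f₂ with hf₁
  have hbij₁ : Function.Bijective f₁ := (Shr_bij β).comp hbij₂
  have hgeo₁ : ∀ G : Set Cyl, IsCylGeodesic G → IsCylGeodesic (f₁ '' G) := by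
    intro G hG
    rw [hf₁, Set.image_comp]
    exact Shr_gp β _ (hgeo₂ G hG)
  have horigin₁ : f₁ ((0:AC), (0:ℝ)) = ((0:AC), (0:ℝ)) := by
    show Shr β (f₂ ((0:AC), (0:ℝ))) = ((0:AC), (0:ℝ))
    rw [horigin₂]
    show ((0:AC) + ((β * 0 :ℝ):AC), (0:ℝ)) = ((0:AC), (0:ℝ))
    rw [mul_zero, ac_zero, add_zero]
  obtain ⟨σ, a, hσ, ha, hform⟩ := main_reduced hbij₁ hgeo₁ horigin₁ hβV
  have hrec : ∀ p : Cyl, f p = Tsl w1 w2 (Shr (-β) (f₁ p)) := by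
    intro p
    show f p = Tsl w1 w2 (Shr (-β) (Shr β (Tsl (-w1) (-w2) (f p))))
    rw [Shr_Shr' β, Tsl_Tsl w1 w2]
  refine ⟨σ, w1, -β * a, a, w2, hσ, ha, ?_⟩
  intro x y
  rw [hrec, hform x y, Shr_π, Tsl_π]
  show cylπ ((σ * x + -β * (a * y)) + w1, a * y + w2) = _
  congr 2
  ring

end
end CylProof

/-- A geodesic-preserving bijection of the flat cylinder is an isometry composed with an
affine map in the `ℝ`-coordinate and a twisting map. -/
theorem cylinder_geodesic_preserving_classification (f : Cyl → Cyl)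
    (hbij : Function.Bijective f)
    (hgeo : ∀ G : Set Cyl, IsCylGeodesic G → IsCylGeodesic (f '' G)) :
    ∃ (σ x₀ α a b : ℝ), (σ = 1 ∨ σ = -1) ∧ a ≠ 0 ∧
      ∀ x y : ℝ, f (cylπ (x, y)) = cylπ (σ * x + α * y + x₀, a * y + b) :=
  CylProof.cylinder_classification f hbij hgeo
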